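/- Suppose k ≥ 1 and e > max(1, max{j + ν_2(j) : 0 < j < k}). Then ν_2(f(2^e - k - 1)) = k + ν_2(k) - e, where f(n) = ∑_{i=0}^{n} C(n,i)^{-1}. -/

import Mathlib

def f (n : ℕ) : ℚ := ∑ k ∈ Finset.range (n + 1), ((n.choose k : ℚ))⁻¹

noncomputable def S (m : ℕ) : ℚ := ∑ i ∈ Finset.range m, 2 ^ (i + 1) / ((i : ℚ) + 1)

lemma f_pos (n : ℕ) : 0 < f n := by
  apply Finset.sum_pos
  · intro i hi
    rw [Finset.mem_range] at hi
    have : 0 < n.choose i := Nat.choose_pos (by omega)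
    positivity
  · exact ⟨0, by simp⟩

lemma f_succ (n : ℕ) : f (n + 1) = (n + 2) / (2 * (n + 1)) * f n + 1 := by
  have key : ∀ i ∈ Finset.range (n + 1), ((n.choose i : ℚ))⁻¹ =
      (n + 1) / (n + 2) * ((((n+1).choose i : ℚ))⁻¹ + (((n+1).choose (i+1) : ℚ))⁻¹) := by
    intro i hi
    rw [Finset.mem_range] at hi
    have hin : i ≤ n := by omega
    have h1 : ((n+1 : ℕ) : ℚ) * (n.choose i : ℚ) = ((n+1).choose (i+1) : ℚ) * ((i+1 : ℕ) : ℚ) := by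
      exact_mod_cast congrArg (Nat.cast : ℕ → ℚ) (Nat.add_one_mul_choose_eq n i)
    have h2 : ((n.choose i : ℕ) : ℚ) * ((n+1 : ℕ) : ℚ) = ((n+1).choose i : ℚ) * ((n + 1 - i : ℕ) : ℚ) := by
      exact_mod_cast congrArg (Nat.cast : ℕ → ℚ) (Nat.choose_mul_succ_eq n i)
    have ha : (0:ℚ) < (n.choose i : ℚ) := by exact_mod_cast Nat.choose_pos hin
    have hb : (0:ℚ) < ((n+1).choose i : ℚ) := by exact_mod_cast Nat.choose_pos (by omega)
    have hc : (0:ℚ) < ((n+1).choose (i+1) : ℚ) := by exact_mod_cast Nat.choose_pos (by omega)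
    have hsub : ((n + 1 - i : ℕ) : ℚ) = (n : ℚ) + 1 - i := by
      push_cast [Nat.cast_sub (by omega : i ≤ n + 1)]; ring
    push_cast at h1 h2
    rw [hsub] at h2
    have hi1 : (0:ℚ) < (i:ℚ) + 1 := by positivity
    have hni : (0:ℚ) < (n:ℚ) + 1 - i := by
      have : (i:ℚ) ≤ n := by exact_mod_cast hin
      linarith
    field_simp
    nlinarith [mul_pos hb hc, mul_pos ha hb, mul_pos ha hc]
  have e1 : f n = (n + 1) / (n + 2) * (2 * f (n + 1) - 2) := by
    rw [f, Finset.sum_congr rfl key, ← Finset.mul_sum, Finset.sum_add_distrib]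
    have s1 : ∑ i ∈ Finset.range (n + 1), (((n+1).choose i : ℚ))⁻¹ = f (n+1) - 1 := by
      rw [f]
      rw [Finset.sum_range_succ (fun i => (((n+1).choose i : ℚ))⁻¹) (n+1)]
      simp
    have s2 : ∑ i ∈ Finset.range (n + 1), (((n+1).choose (i+1) : ℚ))⁻¹ = f (n+1) - 1 := by
      rw [f]
      rw [Finset.sum_range_succ' (fun i => (((n+1).choose i : ℚ))⁻¹) (n+1)]
      simp
    rw [s1, s2]; ring
  have h1 : ((n:ℚ) + 1) ≠ 0 := by positivity
  have h2 : ((n:ℚ) + 2) ≠ 0 := by positivity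
  field_simp at e1 ⊢
  linarith

lemma f_eq (n : ℕ) : f n = ((n : ℚ) + 1) * S (n + 1) / 2 ^ (n + 1) := by
  induction n with
  | zero => simp [f, S]
  | succ n ih =>
    rw [f_succ, ih]
    have hS : S (n + 2) = S (n + 1) + 2 ^ (n + 2) / ((n : ℚ) + 2) := by
      rw [S, Finset.sum_range_succ, ← S]; push_cast; ring
    rw [hS]
    have h1 : ((n:ℚ) + 1) ≠ 0 := by positivity
    have h2 : ((n:ℚ) + 2) ≠ 0 := by positivity
    field_simp
    push_cast; ring

lemma S_pos {m : ℕ} (hm : 0 < m) : 0 < S m := by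
  apply Finset.sum_pos
  · intro i _; positivity
  · exact ⟨0, Finset.mem_range.2 hm⟩

noncomputable def F (i : ℕ) : ℚ := 2 ^ (i + 1) / ((i : ℚ) + 1)

lemma F_pos (i : ℕ) : 0 < F i := by rw [F]; positivity

lemma S_eq (m : ℕ) : S m = ∑ i ∈ Finset.range m, F i := rfl

lemma val_natCast (n : ℕ) : padicValRat 2 (n : ℚ) = padicValNat 2 n :=
  padicValRat.of_nat

lemma val_two_pow (m : ℕ) : padicValRat 2 ((2 : ℚ) ^ m) = m := by
  have h2 : ((2 : ℕ) : ℚ) = (2 : ℚ) := by norm_cast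
  rw [padicValRat.pow (2 : ℚ), ← h2, padicValRat.self (by norm_num), mul_one]

lemma F_val (i : ℕ) : padicValRat 2 (F i) = (i + 1 : ℤ) - padicValNat 2 (i + 1) := by
  have h1 : ((i : ℚ) + 1) = ((i + 1 : ℕ) : ℚ) := by push_cast; ring
  have h2 : ((i + 1 : ℕ) : ℚ) ≠ 0 := by positivity
  rw [F, h1, padicValRat.div (by positivity) h2, val_two_pow, val_natCast]
  push_cast; ring

lemma aux_le_sum {F : ℕ → ℚ} {m : ℤ} {T : Finset ℕ} (hne : T.Nonempty) :
    (∀ i ∈ T, 0 < F i) → (∀ i ∈ T, m ≤ padicValRat 2 (F i)) →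
    m ≤ padicValRat 2 (∑ i ∈ T, F i) := by
  induction' hne using Finset.Nonempty.cons_induction with i a s ha hs ih
  · intro _ h2; simpa using h2 i (by simp)
  · intro h1 h2
    rw [Finset.sum_cons]
    have hsum : 0 < ∑ i ∈ s, F i :=
      Finset.sum_pos (fun i hi => h1 i (by simp [hi])) hs
    refine le_trans (le_min (h2 a (by simp))
      (ih (fun i hi => h1 i (by simp [hi])) (fun i hi => h2 i (by simp [hi]))))
      (padicValRat.min_le_padicValRat_add ?_)
    exact ne_of_gt (add_pos (h1 a (by simp)) hsum)

lemma choose_odd {e i : ℕ} (hi : i ≤ 2 ^ e - 1) :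
    padicValNat 2 ((2 ^ e - 1).choose i) = 0 := by
  have hb : Nat.log 2 (2 ^ e - 1) < e + 1 := by
    have h1 : Nat.log 2 (2 ^ e) = e := Nat.log_pow (by norm_num) e
    have h2 : Nat.log 2 (2 ^ e - 1) ≤ Nat.log 2 (2 ^ e) :=
      Nat.log_mono_right (Nat.sub_le _ _)
    omega
  rw [padicValNat_choose hi hb, Finset.card_eq_zero, Finset.filter_eq_empty_iff]
  intro t ht
  rw [Finset.mem_Ico] at ht
  intro hcon
  obtain ⟨m, hm⟩ : ∃ m, m = 2 ^ t := ⟨_, rfl⟩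
  rw [← hm] at hcon
  have hm2 : 2 ≤ m := by
    rw [hm]
    calc 2 = 2 ^ 1 := rfl
      _ ≤ 2 ^ t := Nat.pow_le_pow_right (by norm_num) ht.1
  obtain ⟨c, hc⟩ : m ∣ 2 ^ e := hm ▸ pow_dvd_pow 2 (by omega)
  have hc1 : 1 ≤ c := by
    rcases Nat.eq_zero_or_pos c with h | h
    · exfalso; rw [h, mul_zero] at hc; exact absurd hc (by positivity)
    · exact h
  obtain ⟨c', rfl⟩ : ∃ c', c = c' + 1 := ⟨c - 1, by omega⟩
  have hNm : (2 ^ e - 1) % m = m - 1 := by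
    rw [hc]
    have h3 : m * (c' + 1) = m * c' + m := by ring
    have h4 : m * (c' + 1) - 1 = m * c' + (m - 1) := by omega
    rw [h4, Nat.mul_add_mod]
    exact Nat.mod_eq_of_lt (by omega)
  obtain ⟨a, ha⟩ : ∃ a, a = i % m := ⟨_, rfl⟩
  obtain ⟨b, hb'⟩ : ∃ b, b = (2 ^ e - 1 - i) % m := ⟨_, rfl⟩
  rw [← ha, ← hb'] at hcon
  have hsplit : i + (2 ^ e - 1 - i) = 2 ^ e - 1 := by omega
  have hmod : (a + b) % m = m - 1 := by
    rw [ha, hb', ← Nat.add_mod, hsplit, hNm]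
  have h1 : a < m := by rw [ha]; exact Nat.mod_lt _ (by omega)
  have h2 : b < m := by rw [hb']; exact Nat.mod_lt _ (by omega)
  obtain ⟨r, hr⟩ : ∃ r, r = (a + b) % m := ⟨_, rfl⟩
  have hd := Nat.div_add_mod (a + b) m
  rw [← hr] at hd hmod
  have hq : (a + b) / m < 2 := Nat.div_lt_of_lt_mul (by omega)
  have hq2 : (a + b) / m = 0 ∨ (a + b) / m = 1 :=
    Nat.le_one_iff_eq_zero_or_eq_one.mp (Nat.lt_succ_iff.mp hq)
  rcases hq2 with h | h
  · rw [h, Nat.mul_zero, Nat.zero_add] at hd; omega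
  · rw [h, Nat.mul_one] at hd; omega

lemma val_fN {e : ℕ} (he : 1 ≤ e) : 1 ≤ padicValRat 2 (f (2 ^ e - 1)) := by
  set M := 2 ^ (e - 1) with hM
  have hM1 : 1 ≤ M := Nat.one_le_two_pow
  have hMM : M + M = 2 ^ e := by
    rw [hM, ← two_mul, ← pow_succ']
    congr 1; omega
  have hMle : M ≤ 2 ^ e - 1 := by omega
  have hfe : f (2 ^ e - 1) =
      2 * ∑ i ∈ Finset.range M, (((2 ^ e - 1).choose i : ℚ))⁻¹ := by
    rw [f]
    have h1 : 2 ^ e - 1 + 1 = M + M := by omega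
    rw [h1, ← Finset.sum_range_add_sum_Ico _ (by omega : M ≤ M + M),
      Finset.sum_Ico_eq_sum_range]
    have h2 : M + M - M = M := by omega
    rw [h2]
    have hrefl := Finset.sum_range_reflect (fun i => (((2 ^ e - 1).choose (M + i) : ℚ))⁻¹) M
    rw [← hrefl]
    have h3 : ∀ i ∈ Finset.range M,
        (((2 ^ e - 1).choose (M + (M - 1 - i)) : ℚ))⁻¹ = (((2 ^ e - 1).choose i : ℚ))⁻¹ := by
      intro i hi
      rw [Finset.mem_range] at hi
      have h4 : M + (M - 1 - i) = 2 ^ e - 1 - i := by omega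
      rw [h4, Nat.choose_symm (by omega)]
    rw [Finset.sum_congr rfl h3, two_mul]
  rw [hfe]
  have hhalf : 0 < ∑ i ∈ Finset.range M, (((2 ^ e - 1).choose i : ℚ))⁻¹ := by
    apply Finset.sum_pos
    · intro i hi
      rw [Finset.mem_range] at hi
      have : 0 < (2 ^ e - 1).choose i := Nat.choose_pos (by omega)
      positivity
    · exact ⟨0, Finset.mem_range.2 hM1⟩
  rw [padicValRat.mul two_ne_zero (ne_of_gt hhalf)]
  have hv2 : padicValRat 2 (2 : ℚ) = 1 := by
    have := val_two_pow 1; simpa using this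
  have h0 : (0 : ℤ) ≤ padicValRat 2 (∑ i ∈ Finset.range M, (((2 ^ e - 1).choose i : ℚ))⁻¹) := by
    apply aux_le_sum ⟨0, Finset.mem_range.2 hM1⟩
    · intro i hi
      rw [Finset.mem_range] at hi
      have : 0 < (2 ^ e - 1).choose i := Nat.choose_pos (by omega)
      positivity
    · intro i hi
      rw [Finset.mem_range] at hi
      have hcp : 0 < (2 ^ e - 1).choose i := Nat.choose_pos (by omega)
      rw [padicValRat.inv, val_natCast, choose_odd (by omega)]
      simp
  omega

theorem stmt_17 (k : ℕ) (hk : 1 ≤ k) (e : ℕ) (he1 : 1 < e)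
    (he2 : ∀ j : ℕ, 0 < j → j < k → j + padicValNat 2 j < e) :
    padicValRat 2 (f (2 ^ e - k - 1)) =
      (k : ℤ) + padicValNat 2 k - e := by
  have hke : k ≤ e := by
    rcases Nat.lt_or_ge 1 k with h | h
    · have := he2 (k - 1) (by omega) (by omega); omega
    · omega
  have heN : e < 2 ^ e := Nat.lt_two_pow_self
  have hkN : k < 2 ^ e := by omega
  have hNcast : ((2 ^ e : ℕ) : ℚ) = (2 : ℚ) ^ e := by push_cast; ring
  have hN0 : ((2 ^ e : ℕ) : ℚ) ≠ 0 := by rw [hNcast]; positivity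
  have hvN : padicValRat 2 ((2 ^ e : ℕ) : ℚ) = (e : ℤ) := by
    rw [hNcast, val_two_pow]
  have hvdiff : ∀ j : ℕ, 0 < j → j < 2 ^ e → padicValNat 2 j < e →
      padicValRat 2 (((2 ^ e : ℕ) : ℚ) - (j : ℚ)) = padicValNat 2 j := by
    intro j hj hjN hje
    have hj0 : (j : ℚ) ≠ 0 := Nat.cast_ne_zero.mpr (by omega)
    have hjlt : (j : ℚ) < ((2 ^ e : ℕ) : ℚ) := by exact_mod_cast hjN
    have hne : ((2 ^ e : ℕ) : ℚ) - (j : ℚ) ≠ 0 := ne_of_gt (by linarith)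
    have hrw : ((2 ^ e : ℕ) : ℚ) - (j : ℚ) = -(j : ℚ) + ((2 ^ e : ℕ) : ℚ) := by ring
    rw [hrw, padicValRat.add_eq_of_lt (by rw [← hrw]; exact hne)
      (neg_ne_zero.mpr hj0) hN0 ?_]
    · rw [padicValRat.neg, val_natCast]
    · rw [padicValRat.neg, val_natCast, hvN]; exact_mod_cast hje
  have hAk : 2 ^ padicValNat 2 k ≤ k := Nat.le_of_dvd (by omega) pow_padicValNat_dvd
  have hAe : padicValNat 2 k < e := by
    by_contra hcon
    push_neg at hcon
    have : 2 ^ e ≤ 2 ^ padicValNat 2 k := Nat.pow_le_pow_right (by norm_num) hcon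
    omega
  -- valuation of S (2 ^ e)
  have hSNpos : 0 < S (2 ^ e) := S_pos (by positivity)
  have hf1 : f (2 ^ e - 1) = ((2 ^ e : ℕ) : ℚ) * S (2 ^ e) / 2 ^ (2 ^ e) := by
    have h0 := f_eq (2 ^ e - 1)
    have h1 : 2 ^ e - 1 + 1 = 2 ^ e := by omega
    rw [h1] at h0
    have h2 : ((2 ^ e - 1 : ℕ) : ℚ) + 1 = ((2 ^ e : ℕ) : ℚ) := by
      rw [Nat.cast_sub (by omega : 1 ≤ 2 ^ e)]; ring
    rw [h2] at h0; exact h0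
  have hvSN : ((2 ^ e : ℕ) : ℤ) - e + 1 ≤ padicValRat 2 (S (2 ^ e)) := by
    have hval := val_fN (show 1 ≤ e by omega)
    rw [hf1, padicValRat.div (mul_ne_zero hN0 (ne_of_gt hSNpos)) (by positivity),
        padicValRat.mul hN0 (ne_of_gt hSNpos), hvN, val_two_pow] at hval
    omega
  -- splitting off the tail
  have hsplitS : S (2 ^ e) = S (2 ^ e - k) + ∑ i ∈ Finset.Ico (2 ^ e - k) (2 ^ e), F i := by
    rw [S_eq, S_eq]
    exact (Finset.sum_range_add_sum_Ico F (by omega : 2 ^ e - k ≤ 2 ^ e)).symm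
  have hFtop : padicValRat 2 (F (2 ^ e - 1)) = ((2 ^ e : ℕ) : ℤ) - e := by
    rw [F_val]
    have h1 : 2 ^ e - 1 + 1 = 2 ^ e := by omega
    rw [h1, padicValNat.prime_pow]
    omega
  have hFmid : ∀ i ∈ Finset.Ico (2 ^ e - k) (2 ^ e - 1),
      padicValRat 2 (F (2 ^ e - 1)) < padicValRat 2 (F i) := by
    intro i hi
    rw [Finset.mem_Ico] at hi
    obtain ⟨j, hj1, hj2, hje⟩ : ∃ j, 0 < j ∧ j < k ∧ i + 1 = 2 ^ e - j :=
      ⟨2 ^ e - 1 - i, by omega, by omega, by omega⟩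
    have hv : padicValNat 2 (i + 1) = padicValNat 2 j := by
      have hcast : ((i + 1 : ℕ) : ℚ) = ((2 ^ e : ℕ) : ℚ) - (j : ℚ) := by
        rw [hje, Nat.cast_sub (by omega : j ≤ 2 ^ e)]
      have hh := hvdiff j hj1 (by omega) (by have := he2 j hj1 hj2; omega)
      rw [← hcast, val_natCast] at hh
      exact_mod_cast hh
    rw [hFtop, F_val, hv]
    have hj3 := he2 j hj1 hj2
    omega
  have hR : padicValRat 2 (∑ i ∈ Finset.Ico (2 ^ e - k) (2 ^ e), F i) = ((2 ^ e : ℕ) : ℤ) - e := by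
    have hsucc : Finset.Ico (2 ^ e - k) (2 ^ e) = Finset.Ico (2 ^ e - k) (2 ^ e - 1 + 1) := by
      congr 1; omega
    rw [hsucc, Finset.sum_Ico_succ_top (by omega : 2 ^ e - k ≤ 2 ^ e - 1)]
    rcases Nat.eq_or_lt_of_le hk with h1 | h1
    · rw [show 2 ^ e - k = 2 ^ e - 1 by omega, Finset.Ico_self, Finset.sum_empty, zero_add,
        hFtop]
    · have hne : (Finset.Ico (2 ^ e - k) (2 ^ e - 1)).Nonempty := by
        rw [Finset.nonempty_Ico]; omega
      have hlt := padicValRat.lt_sum_of_lt (p := 2) (j := 2 ^ e - 1) hne hFmid F_pos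
      have hsum_pos : 0 < ∑ i ∈ Finset.Ico (2 ^ e - k) (2 ^ e - 1), F i :=
        Finset.sum_pos (fun i _ => F_pos i) hne
      have heq := padicValRat.add_eq_of_lt (p := 2)
        (ne_of_gt (add_pos (F_pos (2 ^ e - 1)) hsum_pos))
        (ne_of_gt (F_pos (2 ^ e - 1))) (ne_of_gt hsum_pos) hlt
      rw [add_comm] at heq
      rw [heq, hFtop]
  have hSk_pos : 0 < S (2 ^ e - k) := S_pos (by omega)
  have hRpos : 0 < ∑ i ∈ Finset.Ico (2 ^ e - k) (2 ^ e), F i :=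
    Finset.sum_pos (fun i _ => F_pos i) (by rw [Finset.nonempty_Ico]; omega)
  have hvSk : padicValRat 2 (S (2 ^ e - k)) = ((2 ^ e : ℕ) : ℤ) - e := by
    have heq2 : S (2 ^ e - k) = -(∑ i ∈ Finset.Ico (2 ^ e - k) (2 ^ e), F i) + S (2 ^ e) := by
      rw [hsplitS]; ring
    rw [heq2, padicValRat.add_eq_of_lt (by rw [← heq2]; exact ne_of_gt hSk_pos)
        (neg_ne_zero.mpr (ne_of_gt hRpos)) (ne_of_gt hSNpos) ?_]
    · rw [padicValRat.neg, hR]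
    · rw [padicValRat.neg, hR]; omega
  have hf2 : f (2 ^ e - k - 1) =
      (((2 ^ e : ℕ) : ℚ) - (k : ℚ)) * S (2 ^ e - k) / 2 ^ (2 ^ e - k) := by
    have h0 := f_eq (2 ^ e - k - 1)
    have h1 : 2 ^ e - k - 1 + 1 = 2 ^ e - k := by omega
    rw [h1] at h0
    have h2 : ((2 ^ e - k - 1 : ℕ) : ℚ) + 1 = ((2 ^ e : ℕ) : ℚ) - (k : ℚ) := by
      rw [Nat.cast_sub (by omega : 1 ≤ 2 ^ e - k), Nat.cast_sub (by omega : k ≤ 2 ^ e)]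
      push_cast; ring
    rw [h2] at h0; exact h0
  have hdiffQ : ((2 ^ e : ℕ) : ℚ) - (k : ℚ) ≠ 0 := by
    have : (k : ℚ) < ((2 ^ e : ℕ) : ℚ) := by exact_mod_cast hkN
    exact ne_of_gt (by linarith)
  rw [hf2, padicValRat.div (mul_ne_zero hdiffQ (ne_of_gt hSk_pos)) (by positivity),
    padicValRat.mul hdiffQ (ne_of_gt hSk_pos), hvSk, val_two_pow,
    hvdiff k (by omega) hkN hAe]
  omega
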